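/- For every unweighted, connected, d-regular graph G, every vertex x, and every integer r with 1 ≤ r ≤ diam(x) (where diam(x) is the maximum distance from x to any vertex), the number of vertices within distance r of x satisfies |B(x,r)| ≥ (d+1)·r/3; hence vol(x,r) = d·|B(x,r)| ≥ d²·r/3. -/

import Mathlib

open SimpleGraph

private lemma aux_pred {V : Type*} {G : SimpleGraph V} (hconn : G.Connected) (x y : V)
    (h : 1 ≤ G.dist x y) : ∃ z, G.Adj z y ∧ G.dist x z + 1 = G.dist x y := by
  obtain ⟨p, hp⟩ := hconn.exists_walk_length_eq_dist x y
  have hnil : ¬ p.reverse.Nil := by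
    rw [SimpleGraph.Walk.not_nil_iff_lt_length]
    simpa [hp] using (show 0 < G.dist x y by omega)
  obtain ⟨w, hadj, q, hq⟩ := SimpleGraph.Walk.not_nil_iff.mp hnil
  have hlen : q.length + 1 = G.dist x y := by
    have := congrArg SimpleGraph.Walk.length hq
    simp only [SimpleGraph.Walk.length_reverse, SimpleGraph.Walk.length_cons, hp] at this
    omega
  refine ⟨w, hadj.symm, ?_⟩
  have h1 : G.dist x w ≤ q.length := by
    simpa using G.dist_le q.reverse
  have hwy : G.dist w y = 1 := dist_eq_one_iff_adj.mpr hadj.symm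
  have h2 : G.dist x y ≤ G.dist x w + G.dist w y := hconn.dist_triangle
  omega

private lemma aux_exists {V : Type*} {G : SimpleGraph V} (hconn : G.Connected) (x : V) :
    ∀ n : ℕ, ∀ y, G.dist x y = n → ∀ k, k ≤ n → ∃ z, G.dist x z = k := by
  intro n
  induction n with
  | zero =>
    intro y _ k hk
    exact ⟨x, by simpa [SimpleGraph.dist_self] using (Nat.le_zero.mp hk).symm⟩
  | succ n ih =>
    intro y hy k hk
    rcases Nat.lt_or_ge k (n + 1) with h | h
    · obtain ⟨z, _, hz⟩ := aux_pred hconn x y (by omega)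
      exact ih z (by omega) k (by omega)
    · exact ⟨y, by omega⟩

private lemma aux_fin {V : Type*} {G : SimpleGraph V} [G.LocallyFinite]
    (hconn : G.Connected) (x : V) : ∀ r : ℕ, {y | G.dist x y ≤ r}.Finite := by
  intro r
  induction r with
  | zero =>
    refine (Set.finite_singleton x).subset fun y hy => ?_
    simp only [Set.mem_setOf_eq, Nat.le_zero] at hy
    simp [(hconn.dist_eq_zero_iff.mp hy).symm]
  | succ r ih =>
    have hsub : {y | G.dist x y ≤ r + 1} ⊆
        {y | G.dist x y ≤ r} ∪ ⋃ z ∈ {y | G.dist x y ≤ r}, G.neighborSet z := by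
      intro y hy
      simp only [Set.mem_setOf_eq] at hy
      by_cases h : G.dist x y ≤ r
      · exact Or.inl h
      · obtain ⟨z, hadj, hz⟩ := aux_pred hconn x y (by omega)
        exact Or.inr (Set.mem_biUnion (show z ∈ {y | G.dist x y ≤ r} by
          simp only [Set.mem_setOf_eq]; omega) hadj)
    exact ((ih.union (ih.biUnion fun z _ => (G.neighborSet z).toFinite)).subset hsub)

/-- For a connected `d`-regular unweighted graph, for `1 ≤ r ≤ diam(x)`, the ball of radius
`r` around `x` has at least `(d+1)·r/3` vertices, hence volume at least `d²·r/3`. -/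
theorem stmt2 {V : Type*} (G : SimpleGraph V) [hlf : G.LocallyFinite]
    (d : ℕ) (hreg : G.IsRegularOfDegree d) (hconn : G.Connected)
    (x : V) (r : ℕ) (hr1 : 1 ≤ r) (hr2 : ∃ y, r ≤ G.dist x y) :
    (d + 1) * r ≤ 3 * {y : V | G.dist x y ≤ r}.ncard ∧
      d ^ 2 * r ≤ 3 * (d * {y : V | G.dist x y ≤ r}.ncard) := by
  classical
  obtain ⟨y0, hy0⟩ := hr2
  have hBfin := aux_fin hconn x r
  set k := (r + 2) / 3 with hkdef
  have hk1 : 1 ≤ k := by omega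
  have hk2 : 3 * (k - 1) + 1 ≤ r := by omega
  have hk3 : r ≤ 3 * k := by omega
  have hz : ∀ j : Fin k, ∃ z, G.dist x z = 3 * j :=
    fun j => aux_exists hconn x (G.dist x y0) y0 rfl (3 * j)
      (by have := j.2; omega)
  choose z hzd using hz
  set N : Fin k → Finset V := fun j => insert (z j) (G.neighborFinset (z j)) with hN
  have hNcard : ∀ j, (N j).card = d + 1 := by
    intro j
    rw [hN]
    rw [Finset.card_insert_of_notMem (by simp)]
    rw [SimpleGraph.card_neighborFinset_eq_degree]
    exact congrArg (· + 1) (hreg (z j))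
  have hmem : ∀ (j : Fin k) (w : V), w ∈ N j → G.dist (z j) w ≤ 1 := by
    intro j w hw
    simp only [hN, Finset.mem_insert, SimpleGraph.mem_neighborFinset] at hw
    rcases hw with rfl | h
    · simp [SimpleGraph.dist_self]
    · exact (dist_eq_one_iff_adj.mpr h).le
  have hdisj : ∀ i j : Fin k, i ≠ j → Disjoint (N i) (N j) := by
    intro i j hij
    rw [Finset.disjoint_left]
    intro w hwi hwj
    have h1 := hmem i w hwi
    have h2 := hmem j w hwj
    have h2' : G.dist w (z j) ≤ 1 := by rwa [SimpleGraph.dist_comm]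
    have h3 : G.dist (z i) (z j) ≤ G.dist (z i) w + G.dist w (z j) := hconn.dist_triangle
    have t1 : G.dist x (z j) ≤ G.dist x (z i) + G.dist (z i) (z j) := hconn.dist_triangle
    have h3' : G.dist (z j) (z i) ≤ G.dist (z j) w + G.dist w (z i) := hconn.dist_triangle
    have h1' : G.dist w (z i) ≤ 1 := by rwa [SimpleGraph.dist_comm]
    have t2 : G.dist x (z i) ≤ G.dist x (z j) + G.dist (z j) (z i) := hconn.dist_triangle
    have hij' : (i : ℕ) ≠ (j : ℕ) := fun h => hij (Fin.ext h)
    have di := hzd i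
    have dj := hzd j
    omega
  have hsub : (((Finset.univ : Finset (Fin k)).biUnion N : Finset V) : Set V) ⊆
      {y : V | G.dist x y ≤ r} := by
    intro w hw
    rw [Finset.mem_coe, Finset.mem_biUnion] at hw
    obtain ⟨j, -, hj⟩ := hw
    have h1 : G.dist x w ≤ G.dist x (z j) + G.dist (z j) w := hconn.dist_triangle
    have h2 := hmem j w hj
    have h3 := hzd j
    have h4 : (j : ℕ) ≤ k - 1 := by have := j.2; omega
    simp only [Set.mem_setOf_eq]
    omega
  have hcard : ((Finset.univ : Finset (Fin k)).biUnion N).card = k * (d + 1) := by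
    rw [Finset.card_biUnion (fun i _ j _ h => hdisj i j h)]
    simp [hNcard]
  have hle : k * (d + 1) ≤ {y : V | G.dist x y ≤ r}.ncard := by
    rw [← hcard, ← Set.ncard_coe_finset]
    exact Set.ncard_le_ncard hsub hBfin
  constructor
  · nlinarith [hle, hk3]
  · nlinarith [hle, hk3]
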